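/- Let σ be a magnetic form on 𝕋^{2N} and ε > 0 a constant such that for every smooth loop γ : ℝ → ℝ^{2N} with γ(t+τ) − γ(t) a constant vector in ℤ^{2N} and every v ∈ ℝ^{2N} one has |(F_σ^γ(τ) − Id)·v| ≥ ε·|v| (quantitative non-resonance). Let V be a potential and set ‖∇V‖_∞ = sup_{t,x} |∇V_t(x)|. Let δ ≥ 0, let γ : ℝ → ℝ^{2N} be smooth with γ(t+τ) − γ(t) a constant vector in ℤ^{2N}, and let p : ℝ → ℝ^{2N} be smooth and τ-periodic, and assume that ∫₀^τ |γ'(t) − p(t)|² dt + ∫₀^τ |p'(t) + Y_σ(γ(t))·p(t) + ∇V_t(γ(t))|² dt ≤ δ². Then sup_{t∈ℝ} |p(t)| ≤ (√τ + √(2τ)/ε)·(δ + √τ·‖∇V‖_∞). -/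

import Mathlib

open Real Filter

noncomputable section

/-- Configuration space ℝ^{2N}: coordinate `(j, s)` is the `s`-th coordinate of the
`j`-th particle, with the Euclidean norm. -/
abbrev Conf (N : ℕ) := EuclideanSpace ℝ (Fin N × Fin 2)

/-- The plane ℝ² with the Euclidean norm. -/
abbrev Plane := EuclideanSpace ℝ (Fin 2)

/-- The coordinates of the `j`-th particle. -/
def part {N : ℕ} (x : Conf N) (j : Fin N) : Plane := WithLp.toLp 2 (fun s => x (j, s))

/-- The lattice vector in ℝ^{2N} associated to `m ∈ ℤ^{2N}`. -/
def latVec {N : ℕ} (m : Fin N × Fin 2 → ℤ) : Conf N := WithLp.toLp 2 (fun i => (m i : ℝ))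

/-- The lattice vector in ℝ² associated to `m ∈ ℤ²`. -/
def latVec2 (m : Fin 2 → ℤ) : Plane := WithLp.toLp 2 (fun s => (m s : ℝ))

/-- A product magnetic form on 𝕋^{2N}, encoded by smooth ℤ²-periodic functions
`a j : ℝ² → ℝ`. -/
structure Magnetic (N : ℕ) where
  a : Fin N → Plane → ℝ
  smooth : ∀ j, ContDiff ℝ (⊤ : ℕ∞) (a j)
  periodic : ∀ j (x : Plane) (m : Fin 2 → ℤ), a j (x + latVec2 m) = a j x

/-- `σ` is non-resonant in period `τ`. -/
def Magnetic.NonResonant {N : ℕ} (σ : Magnetic N) (τ : ℝ) : Prop :=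
  ∀ j : Fin N, ∃ k : ℤ, ∀ x : Plane,
    2 * π * k / τ < σ.a j x ∧ σ.a j x < 2 * π * (k + 1) / τ

/-- The Lorentz force `Y_σ(x)·v`: block-diagonal action, the `j`-th 2×2 block being
`a_j(x_j)·J₀` with `J₀ = [[0,-1],[1,0]]`. -/
def lorentz {N : ℕ} (a : Fin N → Plane → ℝ) (x v : Conf N) : Conf N :=
  WithLp.toLp 2 (fun i : Fin N × Fin 2 => if i.2 = (0 : Fin 2) then -(a i.1 (part x i.1)) * v (i.1, 1)
           else (a i.1 (part x i.1)) * v (i.1, 0))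

/-- A potential: smooth, τ-periodic in time and ℤ^{2N}-periodic in space. -/
structure Potential (N : ℕ) (τ : ℝ) where
  V : ℝ → Conf N → ℝ
  smooth : ContDiff ℝ (⊤ : ℕ∞) (Function.uncurry V)
  periodic_t : ∀ t x, V (t + τ) x = V t x
  periodic_x : ∀ t (x : Conf N) (m : Fin N × Fin 2 → ℤ), V t (x + latVec m) = V t x

/-- A τ-periodic solution in class `h ∈ ℤ^{2N}` of
`γ'' = −Y_σ(γ)·γ' − ∇V_t(γ)`. -/
def IsSolution {N : ℕ} (σ : Magnetic N) {τ : ℝ} (P : Potential N τ)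
    (h : Fin N × Fin 2 → ℤ) (γ : ℝ → Conf N) : Prop :=
  ContDiff ℝ (⊤ : ℕ∞) γ ∧
  (∀ t, deriv (deriv γ) t =
    - lorentz σ.a (γ t) (deriv γ t) - gradient (P.V t) (γ t)) ∧
  (∀ t, γ (t + τ) = γ t + latVec h) ∧
  (∀ t, deriv γ (t + τ) = deriv γ t)

/-- Two solutions are identified iff they differ by a lattice translation. -/
def SameSol {N : ℕ} (γ₁ γ₂ : ℝ → Conf N) : Prop :=
  ∃ m : Fin N × Fin 2 → ℤ, ∀ t, γ₁ t = γ₂ t + latVec m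

/-- Non-degeneracy of a τ-periodic solution: the only τ-periodic solution of the
linearized equation is `ξ ≡ 0`. -/
def NonDegenerate {N : ℕ} (σ : Magnetic N) {τ : ℝ} (P : Potential N τ)
    (γ : ℝ → Conf N) : Prop :=
  ∀ ξ : ℝ → Conf N, ContDiff ℝ (⊤ : ℕ∞) ξ →
    (∀ t, deriv (deriv ξ) t =
      - fderiv ℝ (fun x => lorentz σ.a x (deriv γ t)) (γ t) (ξ t)
      - lorentz σ.a (γ t) (deriv ξ t)
      - fderiv ℝ (fun x => gradient (P.V t) x) (γ t) (ξ t)) →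
    ξ τ = ξ 0 → deriv ξ τ = deriv ξ 0 → ∀ t, ξ t = 0
open Matrix

/-- `b_j^γ(t) = ∫₀^t a_j(γ_j(s)) ds`. -/
def bgam {N : ℕ} (σ : Magnetic N) (γ : ℝ → Conf N) (j : Fin N) (t : ℝ) : ℝ :=
  ∫ s in (0:ℝ)..t, σ.a j (part (γ s) j)

/-- The rotation matrix `exp(θ·J₀) = [[cos θ, −sin θ],[sin θ, cos θ]]`. -/
def rotMat (θ : ℝ) : Matrix (Fin 2) (Fin 2) ℝ :=
  !![Real.cos θ, -Real.sin θ; Real.sin θ, Real.cos θ]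

/-- `F_σ^γ(t)`: the block-diagonal matrix whose `j`-th 2×2 block is the rotation
`exp(b_j^γ(t)·J₀)`. -/
def Fsol {N : ℕ} (σ : Magnetic N) (γ : ℝ → Conf N) (t : ℝ) :
    Matrix (Fin N × Fin 2) (Fin N × Fin 2) ℝ :=
  fun i k => if i.1 = k.1 then rotMat (bgam σ γ i.1 t) i.2 k.2 else 0

/-- `(F_σ^γ(τ) − Id)·v`, viewed as a vector of the Euclidean space ℝ^{2N}. -/
def FminusIdMulVec {N : ℕ} (σ : Magnetic N) (γ : ℝ → Conf N) (τ : ℝ) (v : Conf N) : Conf N :=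
  (EuclideanSpace.equiv (Fin N × Fin 2) ℝ).symm
    ((Fsol σ γ τ - 1).mulVec (EuclideanSpace.equiv (Fin N × Fin 2) ℝ v))

section aux

lemma euclid_continuous_of_coords {α : Type*} [TopologicalSpace α] {ι : Type*} [Fintype ι]
    {f : α → EuclideanSpace ℝ ι} (h : ∀ i, Continuous fun a => f a i) : Continuous f :=
  (EuclideanSpace.equiv ι ℝ).symm.continuous.comp (continuous_pi h)

lemma euclid_coord_continuous {α : Type*} [TopologicalSpace α] {ι : Type*} [Fintype ι]
    {f : α → EuclideanSpace ℝ ι} (h : Continuous f) (i : ι) : Continuous fun a => f a i :=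
  (continuous_apply i).comp ((EuclideanSpace.equiv ι ℝ).continuous.comp h)

lemma euclid_hasDerivAt_of_coords {ι : Type*} [Fintype ι] {f : ℝ → EuclideanSpace ℝ ι}
    {f' : EuclideanSpace ℝ ι} {t : ℝ} (h : ∀ i, HasDerivAt (fun s => f s i) (f' i) t) :
    HasDerivAt f f' t := by
  have h1 : HasDerivAt (fun s => (fun i => f s i : ι → ℝ)) (fun i => f' i) t := hasDerivAt_pi.2 h
  exact ((EuclideanSpace.equiv ι ℝ).symm.toContinuousLinearMap.hasFDerivAt.comp_hasDerivAt t h1 :)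

lemma euclid_coord_hasDerivAt {ι : Type*} [Fintype ι] {f : ℝ → EuclideanSpace ℝ ι}
    {f' : EuclideanSpace ℝ ι} {t : ℝ} (h : HasDerivAt f f' t) (i : ι) :
    HasDerivAt (fun s => f s i) (f' i) t :=
  ((EuclideanSpace.proj i).hasFDerivAt.comp_hasDerivAt t h :)

/-- block rotation action on `Conf N` -/
def rotVec {N : ℕ} (θ : Fin N → ℝ) (v : Conf N) : Conf N :=
  WithLp.toLp 2 (fun i : Fin N × Fin 2 => if i.2 = (0 : Fin 2) then Real.cos (θ i.1) * v (i.1, 0) - Real.sin (θ i.1) * v (i.1, 1)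
    else Real.sin (θ i.1) * v (i.1, 0) + Real.cos (θ i.1) * v (i.1, 1))

lemma rotVec_apply_zero {N : ℕ} (θ : Fin N → ℝ) (v : Conf N) (j : Fin N) :
    rotVec θ v (j, 0) = Real.cos (θ j) * v (j, 0) - Real.sin (θ j) * v (j, 1) := rfl

lemma rotVec_apply_one {N : ℕ} (θ : Fin N → ℝ) (v : Conf N) (j : Fin N) :
    rotVec θ v (j, 1) = Real.sin (θ j) * v (j, 0) + Real.cos (θ j) * v (j, 1) := by
  simp [rotVec, show (1 : Fin 2) ≠ 0 by decide]

lemma norm_rotVec {N : ℕ} (θ : Fin N → ℝ) (v : Conf N) : ‖rotVec θ v‖ = ‖v‖ := by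
  rw [EuclideanSpace.norm_eq, EuclideanSpace.norm_eq]
  congr 1
  rw [Fintype.sum_prod_type, Fintype.sum_prod_type]
  refine Finset.sum_congr rfl fun j _ => ?_
  rw [Fin.sum_univ_two, Fin.sum_univ_two, rotVec_apply_zero, rotVec_apply_one]
  have h := Real.sin_sq_add_cos_sq (θ j)
  simp only [Real.norm_eq_abs, sq_abs]
  linear_combination (v (j, 0) ^ 2 + v (j, 1) ^ 2) * h

lemma rotVec_zero {N : ℕ} (v : Conf N) : rotVec (fun _ => (0 : ℝ)) v = v := by
  ext i
  obtain ⟨j, s⟩ := i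
  fin_cases s <;> simp [rotVec_apply_zero, rotVec_apply_one]

lemma fminus_eq {N : ℕ} (σ : Magnetic N) (γ : ℝ → Conf N) (T : ℝ) (v : Conf N) :
    FminusIdMulVec σ γ T v = rotVec (fun j => bgam σ γ j T) v - v := by
  ext i
  obtain ⟨j, s⟩ := i
  have hL : FminusIdMulVec σ γ T v (j, s)
      = (∑ k2 : Fin 2, rotMat (bgam σ γ j T) s k2 * v (j, k2)) - v (j, s) := by
    show ((Fsol σ γ T - 1).mulVec (fun i => v i)) (j, s) = _
    rw [Matrix.sub_mulVec, Matrix.one_mulVec]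
    have : (Fsol σ γ T).mulVec (fun i => v i) (j, s)
        = ∑ k2 : Fin 2, rotMat (bgam σ γ j T) s k2 * v (j, k2) := by
      simp only [Matrix.mulVec, dotProduct, Fsol, Fintype.sum_prod_type, ite_mul, zero_mul]
      rw [Finset.sum_comm]
      simp [Finset.sum_ite_eq, Finset.mem_univ]
    simpa [this] using rfl
  rw [hL]
  have hR : (rotVec (fun j => bgam σ γ j T) v - v) (j, s)
      = rotVec (fun j => bgam σ γ j T) v (j, s) - v (j, s) := rfl
  rw [hR]
  congr 1
  fin_cases s <;>
    simp [Fin.sum_univ_two, rotVec_apply_zero, rotVec_apply_one, rotMat,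
      Matrix.cons_val_zero, Matrix.cons_val_one, Matrix.head_cons] <;> ring

lemma bgam_zero {N : ℕ} (σ : Magnetic N) (γ : ℝ → Conf N) (j : Fin N) : bgam σ γ j 0 = 0 :=
  intervalIntegral.integral_same

end aux
section gradbound

open InnerProductSpace

/-- the gradient as a function of `(t, x)`, expressed via `fderiv` of the uncurried map -/
lemma grad_partial {N : ℕ} {τ : ℝ} (P : Potential N τ) (t : ℝ) (x : Conf N) :
    HasFDerivAt (P.V t) ((fderiv ℝ (Function.uncurry P.V) (t, x)).comp
      (ContinuousLinearMap.inr ℝ ℝ (Conf N))) x :=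
  (((P.smooth.differentiable (by simp)) (t, x)).hasFDerivAt).comp x (hasFDerivAt_prodMk_right t x)

lemma grad_eq {N : ℕ} {τ : ℝ} (P : Potential N τ) (t : ℝ) (x : Conf N) :
    gradient (P.V t) x = (toDual ℝ (Conf N)).symm
      ((fderiv ℝ (Function.uncurry P.V) (t, x)).comp (ContinuousLinearMap.inr ℝ ℝ (Conf N))) := by
  have h : HasGradientAt (P.V t) ((toDual ℝ (Conf N)).symm
      ((fderiv ℝ (Function.uncurry P.V) (t, x)).comp (ContinuousLinearMap.inr ℝ ℝ (Conf N)))) x := by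
    rw [hasGradientAt_iff_hasFDerivAt, LinearIsometryEquiv.apply_symm_apply]
    exact grad_partial P t x
  exact h.gradient

lemma grad_continuous {N : ℕ} {τ : ℝ} (P : Potential N τ) :
    Continuous fun z : ℝ × Conf N => gradient (P.V z.1) z.2 := by
  have h1 : Continuous fun z : ℝ × Conf N =>
      ((fderiv ℝ (Function.uncurry P.V) z).comp (ContinuousLinearMap.inr ℝ ℝ (Conf N))) :=
    (P.smooth.continuous_fderiv (by simp)).clm_comp continuous_const
  have h2 : Continuous fun z : ℝ × Conf N => (toDual ℝ (Conf N)).symm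
      ((fderiv ℝ (Function.uncurry P.V) z).comp (ContinuousLinearMap.inr ℝ ℝ (Conf N))) :=
    (toDual ℝ (Conf N)).symm.continuous.comp h1
  refine h2.congr fun z => ?_
  rw [grad_eq]

lemma grad_periodic_t {N : ℕ} {τ : ℝ} (P : Potential N τ) (n : ℤ) (t : ℝ) :
    P.V (t - n * τ) = P.V t := by
  have hper : Function.Periodic (fun s => P.V s) τ := fun s => funext fun y => P.periodic_t s y
  exact hper.sub_int_mul_eq n

lemma grad_periodic_x {N : ℕ} {τ : ℝ} (P : Potential N τ) (t : ℝ) (x : Conf N)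
    (m : Fin N × Fin 2 → ℤ) :
    gradient (P.V t) (x + latVec m) = gradient (P.V t) x := by
  have hd : DifferentiableAt ℝ (P.V t) (x + latVec m) := (grad_partial P t _).differentiableAt
  have h1 : HasFDerivAt (fun y : Conf N => P.V t (y + latVec m))
      ((fderiv ℝ (P.V t) (x + latVec m)).comp (ContinuousLinearMap.id ℝ (Conf N))) x :=
    hd.hasFDerivAt.comp x ((hasFDerivAt_id x).add_const (latVec m))
  have h2 : (fun y : Conf N => P.V t (y + latVec m)) = P.V t :=
    funext fun y => P.periodic_x t y m
  rw [h2, ContinuousLinearMap.comp_id] at h1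
  unfold gradient
  rw [h1.fderiv]

lemma grad_bound {N : ℕ} {τ : ℝ} (hτ : 0 < τ) (P : Potential N τ) :
    ∃ C : ℝ, 0 ≤ C ∧ ∀ t x, ‖gradient (P.V t) x‖ ≤ C := by
  set R : ℝ := Real.sqrt (N * 2) with hR
  set S : Set (ℝ × Conf N) := Set.Icc (0 : ℝ) τ ×ˢ Metric.closedBall (0 : Conf N) R with hS
  have hcomp : IsCompact S := isCompact_Icc.prod (isCompact_closedBall _ _)
  obtain ⟨C, hC⟩ := hcomp.exists_bound_of_continuousOn (grad_continuous P).continuousOn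
  refine ⟨max C 0, le_max_right _ _, fun t x => ?_⟩
  -- reduce t
  set t' : ℝ := t - ⌊t / τ⌋ * τ with ht'
  have hVt : P.V t' = P.V t := grad_periodic_t P ⌊t / τ⌋ t
  have ht'mem : t' ∈ Set.Icc (0 : ℝ) τ := by
    have h1 : t' = τ * Int.fract (t / τ) := by
      rw [Int.fract]
      field_simp [ht']
      ring
    constructor
    · rw [h1]; exact mul_nonneg hτ.le (Int.fract_nonneg _)
    · rw [h1]
      calc τ * Int.fract (t / τ) ≤ τ * 1 :=
        mul_le_mul_of_nonneg_left (Int.fract_lt_one _).le hτ.le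
      _ = τ := mul_one τ
  -- reduce x
  set m : Fin N × Fin 2 → ℤ := fun i => ⌊x i⌋ with hm
  set x' : Conf N := x - latVec m with hx'
  have hxx : x' + latVec m = x := by
    ext i
    rw [hx', PiLp.add_apply, PiLp.sub_apply]
    show x i - (⌊x i⌋ : ℝ) + (⌊x i⌋ : ℝ) = x i
    ring
  have hx'mem : x' ∈ Metric.closedBall (0 : Conf N) R := by
    rw [Metric.mem_closedBall, dist_zero_right, EuclideanSpace.norm_eq]
    have hsum : (∑ i : Fin N × Fin 2, ‖x' i‖ ^ 2) ≤ (N * 2 : ℝ) := by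
      have hterm : ∀ i : Fin N × Fin 2, ‖x' i‖ ^ 2 ≤ 1 := by
        intro i
        have : x' i = Int.fract (x i) := by
          rw [hx', PiLp.sub_apply]
          show x i - (⌊x i⌋ : ℝ) = _
          rw [Int.fract]
        rw [this, Real.norm_eq_abs, sq_abs]
        nlinarith [Int.fract_nonneg (x i), (Int.fract_lt_one (x i)).le]
      calc (∑ i : Fin N × Fin 2, ‖x' i‖ ^ 2) ≤ ∑ _i : Fin N × Fin 2, (1 : ℝ) :=
        Finset.sum_le_sum fun i _ => hterm i
      _ = (N * 2 : ℝ) := by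
        simp [Finset.sum_const, Fintype.card_prod]
    exact Real.sqrt_le_sqrt hsum
  have hgx : gradient (P.V t) x = gradient (P.V t') x' := by
    rw [hVt, ← hxx, grad_periodic_x]
  rw [hgx]
  exact le_max_of_le_left (hC (t', x') ⟨ht'mem, hx'mem⟩)

end gradbound
section cs

lemma integral_le_sqrt_bound {T : ℝ} (hT : 0 < T) {f : ℝ → ℝ} (hf : Continuous f)
    (hf0 : ∀ s, 0 ≤ f s) {D : ℝ} (hD : 0 ≤ D)
    (hI : (∫ s in (0:ℝ)..T, f s ^ 2) ≤ D ^ 2) :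
    (∫ s in (0:ℝ)..T, f s) ≤ Real.sqrt T * D := by
  have key : ∀ c : ℝ, 0 < c → (∫ s in (0:ℝ)..T, f s) ≤ D ^ 2 / (2 * c) + c * T / 2 := by
    intro c hc
    have hmono : (∫ s in (0:ℝ)..T, f s) ≤ ∫ s in (0:ℝ)..T, (f s ^ 2 / (2 * c) + c / 2) := by
      refine intervalIntegral.integral_mono_on hT.le (hf.intervalIntegrable _ _)
        ((((hf.pow 2).div_const _).add continuous_const).intervalIntegrable _ _) ?_
      intro s _
      have h := sq_nonneg (f s - c)
      have : 0 < 2 * c := by positivity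
      rw [← sub_nonneg]
      have hexp : f s ^ 2 / (2 * c) + c / 2 - f s = (f s - c) ^ 2 / (2 * c) := by
        field_simp
        ring
      rw [hexp]
      positivity
    have heq : (∫ s in (0:ℝ)..T, (f s ^ 2 / (2 * c) + c / 2))
        = (∫ s in (0:ℝ)..T, f s ^ 2) / (2 * c) + T * (c / 2) := by
      rw [intervalIntegral.integral_add (by exact ((hf.pow 2).div_const _).intervalIntegrable _ _ : IntervalIntegrable (fun s => f s ^ 2 / (2 * c)) MeasureTheory.volume 0 T)
        (continuous_const.intervalIntegrable _ _), intervalIntegral.integral_div,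
        intervalIntegral.integral_const]
      simp
    have hIc : (∫ s in (0:ℝ)..T, f s ^ 2) / (2 * c) ≤ D ^ 2 / (2 * c) :=
      div_le_div_of_nonneg_right hI (by positivity)
    calc (∫ s in (0:ℝ)..T, f s) ≤ _ := hmono
      _ = _ := heq
      _ ≤ D ^ 2 / (2 * c) + c * T / 2 := by linarith
  rcases eq_or_lt_of_le hD with hD0 | hDpos
  · have hle0 : (∫ s in (0:ℝ)..T, f s) ≤ 0 := by
      by_contra hcon
      push_neg at hcon
      have := key ((∫ s in (0:ℝ)..T, f s) / T) (by positivity)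
      rw [← hD0] at this
      have hTne : T ≠ 0 := hT.ne'
      rw [zero_pow two_ne_zero, zero_div, zero_add, div_mul_cancel₀ _ hTne] at this
      linarith
    calc (∫ s in (0:ℝ)..T, f s) ≤ 0 := hle0
      _ ≤ Real.sqrt T * D := by positivity
  · have hs : 0 < Real.sqrt T := Real.sqrt_pos.mpr hT
    have hs2 : Real.sqrt T ^ 2 = T := Real.sq_sqrt hT.le
    have := key (D / Real.sqrt T) (by positivity)
    have hval : D ^ 2 / (2 * (D / Real.sqrt T)) + D / Real.sqrt T * T / 2
        = Real.sqrt T * D := by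
      field_simp
      nlinarith [hs2]
    linarith [this, hval.le, hval.ge]
  
end cs
theorem momentum_linfty_bound
    (N : ℕ) (τ : ℝ) (hτ : 0 < τ) (σ : Magnetic N) (ε : ℝ) (hε : 0 < ε)
    (hqnr : ∀ γ : ℝ → Conf N, ContDiff ℝ (⊤ : ℕ∞) γ →
      (∃ h : Fin N × Fin 2 → ℤ, ∀ t, γ (t + τ) = γ t + latVec h) →
      ∀ v : Conf N, ε * ‖v‖ ≤ ‖FminusIdMulVec σ γ τ v‖)
    (P : Potential N τ) (δ : ℝ) (hδ : 0 ≤ δ)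
    (γ p : ℝ → Conf N) (hγ : ContDiff ℝ (⊤ : ℕ∞) γ) (hp : ContDiff ℝ (⊤ : ℕ∞) p)
    (hlat : ∃ h : Fin N × Fin 2 → ℤ, ∀ t, γ (t + τ) = γ t + latVec h)
    (hpper : ∀ t, p (t + τ) = p t)
    (hineq : (∫ t in (0:ℝ)..τ, ‖deriv γ t - p t‖ ^ 2) +
        (∫ t in (0:ℝ)..τ,
          ‖deriv p t + lorentz σ.a (γ t) (p t) + gradient (P.V t) (γ t)‖ ^ 2) ≤ δ ^ 2) :
    ∀ t : ℝ, ‖p t‖ ≤ (Real.sqrt τ + Real.sqrt (2 * τ) / ε) *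
      (δ + Real.sqrt τ * (⨆ s : ℝ, ⨆ x : Conf N, ‖gradient (P.V s) x‖)) := by
  -- the sup norm of the gradient
  obtain ⟨C, hC0, hC⟩ := grad_bound hτ P
  set G : ℝ := ⨆ s : ℝ, ⨆ x : Conf N, ‖gradient (P.V s) x‖ with hGdef
  have hbddin : ∀ s : ℝ, BddAbove (Set.range fun x : Conf N => ‖gradient (P.V s) x‖) :=
    fun s => ⟨C, by rintro _ ⟨x, rfl⟩; exact hC s x⟩
  have hbddout : BddAbove (Set.range fun s : ℝ => ⨆ x : Conf N, ‖gradient (P.V s) x‖) :=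
    ⟨C, by rintro _ ⟨s, rfl⟩; exact ciSup_le fun x => hC s x⟩
  have hGle : ∀ s x, ‖gradient (P.V s) x‖ ≤ G := fun s x =>
    (le_ciSup (hbddin s) x).trans (le_ciSup hbddout s)
  have hG0 : 0 ≤ G := (norm_nonneg _).trans (hGle 0 0)
  have hpos : 0 ≤ δ + Real.sqrt τ * G :=
    add_nonneg hδ (mul_nonneg (Real.sqrt_nonneg _) hG0)
  -- the phases b and their derivatives
  set b : Fin N → ℝ → ℝ := fun j s => bgam σ γ j s with hbdef
  have hacont : ∀ j : Fin N, Continuous fun s => σ.a j (part (γ s) j) := by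
    intro j
    refine ((σ.smooth j).continuous).comp ?_
    refine euclid_continuous_of_coords fun i => ?_
    exact euclid_coord_continuous hγ.continuous (j, i)
  have hb : ∀ (j : Fin N) (t : ℝ), HasDerivAt (b j) (σ.a j (part (γ t) j)) t := fun j t =>
    ((hacont j).integral_hasStrictDerivAt 0 t).hasDerivAt
  have hbcont : ∀ j, Continuous (b j) := fun j =>
    continuous_iff_continuousAt.2 fun t => (hb j t).continuousAt
  -- momentum derivative
  have hpd : ∀ t, HasDerivAt p (deriv p t) t := fun t =>
    ((hp.differentiable (by simp)) t).hasDerivAt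
  have hdpc : Continuous (deriv p) := hp.continuous_deriv (by exact_mod_cast le_top)
  -- vector fields w and e
  set w : ℝ → Conf N := fun s => deriv p s + lorentz σ.a (γ s) (p s) with hwdef
  set e : ℝ → Conf N :=
    fun s => deriv p s + lorentz σ.a (γ s) (p s) + gradient (P.V s) (γ s) with hedef
  have hwe : ∀ s, w s = e s - gradient (P.V s) (γ s) := by
    intro s
    simp only [hwdef, hedef]
    rw [add_sub_cancel_right]
  -- continuity facts
  have hlorc : Continuous fun s => lorentz σ.a (γ s) (p s) := by
    refine euclid_continuous_of_coords fun i => ?_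
    by_cases hi : i.2 = 0 <;> simp only [lorentz, hi] <;> simp only [if_true, if_false,
      reduceIte, ite_true, ite_false, eq_self_iff_true]
    · first
      | exact ((hacont i.1).neg.mul (euclid_coord_continuous hp.continuous _))
      | exact (((hacont i.1).mul (euclid_coord_continuous hp.continuous _)).neg)
    · exact ((hacont i.1).mul (euclid_coord_continuous hp.continuous _))
  have hgradc : Continuous fun s => gradient (P.V s) (γ s) :=
    (grad_continuous P).comp (continuous_id.prodMk hγ.continuous)
  have hwcont : Continuous w := by rw [hwdef]; exact hdpc.add hlorc
  have hecont : Continuous e := by rw [hedef]; exact (hdpc.add hlorc).add hgradc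
  have hu'cont : Continuous fun s => rotVec (fun j => b j s) (w s) := by
    refine euclid_continuous_of_coords fun i => ?_
    by_cases hi : i.2 = 0 <;> simp only [rotVec, hi] <;> simp only [if_true, if_false,
      reduceIte, ite_true, ite_false, eq_self_iff_true]
    · exact (((Real.continuous_cos.comp (hbcont i.1)).mul (euclid_coord_continuous hwcont _)).sub
        ((Real.continuous_sin.comp (hbcont i.1)).mul (euclid_coord_continuous hwcont _)))
    · exact (((Real.continuous_sin.comp (hbcont i.1)).mul (euclid_coord_continuous hwcont _)).add
        ((Real.continuous_cos.comp (hbcont i.1)).mul (euclid_coord_continuous hwcont _)))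
  -- the rotated momentum u
  set u : ℝ → Conf N := fun s => rotVec (fun j => b j s) (p s) with hudef
  have hu : ∀ s : ℝ, HasDerivAt u (rotVec (fun j => b j s) (w s)) s := by
    intro s
    refine euclid_hasDerivAt_of_coords fun i => ?_
    have h0 := euclid_coord_hasDerivAt (hpd s) (i.1, (0 : Fin 2))
    have h1 := euclid_coord_hasDerivAt (hpd s) (i.1, (1 : Fin 2))
    have hbj := hb i.1 s
    have hw0 : w s (i.1, (0 : Fin 2))
        = deriv p s (i.1, 0) + -(σ.a i.1 (part (γ s) i.1)) * p s (i.1, 1) := by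
      simp only [hwdef]; rfl
    have hw1 : w s (i.1, (1 : Fin 2))
        = deriv p s (i.1, 1) + σ.a i.1 (part (γ s) i.1) * p s (i.1, 0) := by
      simp only [hwdef]
      show (deriv p s + lorentz σ.a (γ s) (p s)) (i.1, 1) = _
      have : lorentz σ.a (γ s) (p s) (i.1, 1) = σ.a i.1 (part (γ s) i.1) * p s (i.1, 0) := by
        simp [lorentz, show (1 : Fin 2) ≠ 0 by decide]
      show deriv p s (i.1, 1) + lorentz σ.a (γ s) (p s) (i.1, 1) = _
      rw [this]
    simp only [hudef, rotVec, PiLp.toLp_apply]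
    split_ifs with hi
    · rw [hw0, hw1]
      have hh := (hbj.cos.mul h0).sub (hbj.sin.mul h1)
      refine hh.congr_deriv ?_
      ring
    · rw [hw0, hw1]
      have hh := (hbj.sin.mul h0).add (hbj.cos.mul h1)
      refine hh.congr_deriv ?_
      ring
  -- the second integral in hineq is at most δ²
  have hIe : (∫ s in (0:ℝ)..τ, ‖e s‖ ^ 2) ≤ δ ^ 2 := by
    have hfirst : 0 ≤ ∫ t in (0:ℝ)..τ, ‖deriv γ t - p t‖ ^ 2 :=
      intervalIntegral.integral_nonneg hτ.le fun s _ => by positivity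
    have heq : (∫ t in (0:ℝ)..τ,
        ‖deriv p t + lorentz σ.a (γ t) (p t) + gradient (P.V t) (γ t)‖ ^ 2)
        = ∫ s in (0:ℝ)..τ, ‖e s‖ ^ 2 := by simp only [hedef]
    linarith
  have hIe1 : (∫ s in (0:ℝ)..τ, ‖e s‖) ≤ Real.sqrt τ * δ :=
    integral_le_sqrt_bound hτ hecont.norm (fun s => norm_nonneg _) hδ hIe
  -- the key estimate on increments of u
  set K : ℝ := Real.sqrt τ * δ + τ * G with hKdef
  have hK : ∀ t' ∈ Set.Icc (0:ℝ) τ, ‖u t' - u 0‖ ≤ K := by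
    intro t' ht'
    have h1 : (∫ s in (0:ℝ)..t', rotVec (fun j => b j s) (w s)) = u t' - u 0 :=
      intervalIntegral.integral_eq_sub_of_hasDerivAt (fun s _ => hu s)
        (hu'cont.intervalIntegrable _ _)
    rw [← h1]
    calc ‖∫ s in (0:ℝ)..t', rotVec (fun j => b j s) (w s)‖
        ≤ ∫ s in (0:ℝ)..t', ‖rotVec (fun j => b j s) (w s)‖ :=
          intervalIntegral.norm_integral_le_integral_norm ht'.1
      _ ≤ ∫ s in (0:ℝ)..τ, ‖rotVec (fun j => b j s) (w s)‖ :=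
          intervalIntegral.integral_mono_interval le_rfl ht'.1 ht'.2
            (MeasureTheory.ae_of_all _ fun s => norm_nonneg _)
            (hu'cont.norm.intervalIntegrable _ _)
      _ = ∫ s in (0:ℝ)..τ, ‖w s‖ :=
          intervalIntegral.integral_congr fun s _ => norm_rotVec _ _
      _ ≤ ∫ s in (0:ℝ)..τ, (‖e s‖ + G) := by
          refine intervalIntegral.integral_mono_on hτ.le (hwcont.norm.intervalIntegrable _ _)
            ((hecont.norm.add continuous_const).intervalIntegrable _ _) fun s _ => ?_
          rw [hwe s]
          exact (norm_sub_le _ _).trans (by linarith [hGle s (γ s)])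
      _ = (∫ s in (0:ℝ)..τ, ‖e s‖) + τ * G := by
          rw [intervalIntegral.integral_add (hecont.norm.intervalIntegrable _ _)
            (continuous_const.intervalIntegrable _ _), intervalIntegral.integral_const]
          simp [smul_eq_mul]
      _ ≤ K := by rw [hKdef]; linarith
  -- endpoint values of u
  have hpτ : p τ = p 0 := by have := hpper 0; rwa [zero_add] at this
  have hu0 : u 0 = p 0 := by
    simp only [hudef]
    have hz : (fun j => b j 0) = fun _ : Fin N => (0:ℝ) :=
      funext fun j => by simp only [hbdef]; exact bgam_zero σ γ j
    rw [hz, rotVec_zero]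
  have huτ : u τ = rotVec (fun j => bgam σ γ j τ) (p 0) := by
    simp only [hudef]
    rw [hpτ]
  -- quantitative non-resonance gives a bound on p 0
  have hq := hqnr γ hγ hlat (p 0)
  rw [fminus_eq] at hq
  have hq2 : ε * ‖p 0‖ ≤ K := by
    have : rotVec (fun j => bgam σ γ j τ) (p 0) - p 0 = u τ - u 0 := by
      rw [huτ, hu0]
    rw [this] at hq
    exact hq.trans (hK τ ⟨hτ.le, le_rfl⟩)
  have hp0 : ‖p 0‖ ≤ K / ε := by
    rw [le_div_iff₀ hε]
    linarith [hq2, mul_comm ε ‖p 0‖]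
  -- bound on [0, τ]
  have hsqrtle : Real.sqrt τ ≤ Real.sqrt (2 * τ) := Real.sqrt_le_sqrt (by linarith)
  have hss : Real.sqrt τ * Real.sqrt τ = τ := Real.mul_self_sqrt hτ.le
  have hKval : K = Real.sqrt τ * (δ + Real.sqrt τ * G) := by
    rw [hKdef, mul_add, ← mul_assoc, hss]
  have hKε : K / ε ≤ Real.sqrt (2 * τ) / ε * (δ + Real.sqrt τ * G) := by
    rw [hKval, div_mul_eq_mul_div]
    gcongr
  have hmain : ∀ t' ∈ Set.Icc (0:ℝ) τ, ‖p t'‖ ≤ (Real.sqrt τ + Real.sqrt (2 * τ) / ε) *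
      (δ + Real.sqrt τ * G) := by
    intro t' ht'
    have h1 : ‖p t'‖ = ‖u t'‖ := by
      simp only [hudef]; rw [norm_rotVec]
    have h2 : ‖u t'‖ ≤ ‖u 0‖ + ‖u t' - u 0‖ := by
      have h5 := norm_add_le (u 0) (u t' - u 0)
      rw [show u 0 + (u t' - u 0) = u t' by abel] at h5
      exact h5
    have h3 := hK t' ht'
    have h4 : ‖u 0‖ = ‖p 0‖ := by rw [hu0]
    calc ‖p t'‖ ≤ ‖p 0‖ + K := by rw [h1]; rw [h4] at h2; linarith
      _ ≤ K / ε + K := by linarith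
      _ ≤ Real.sqrt (2 * τ) / ε * (δ + Real.sqrt τ * G)
            + Real.sqrt τ * (δ + Real.sqrt τ * G) := by rw [hKval] at *; linarith
      _ = (Real.sqrt τ + Real.sqrt (2 * τ) / ε) * (δ + Real.sqrt τ * G) := by ring
  -- reduce an arbitrary t to [0, τ]
  intro t0
  have hper : Function.Periodic p τ := hpper
  have hrep : p (t0 - ⌊t0 / τ⌋ * τ) = p t0 := hper.sub_int_mul_eq ⌊t0 / τ⌋
  have hmem : t0 - ⌊t0 / τ⌋ * τ ∈ Set.Icc (0:ℝ) τ := by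
    have h1 : t0 - ⌊t0 / τ⌋ * τ = τ * Int.fract (t0 / τ) := by
      rw [Int.fract]
      field_simp
    constructor
    · rw [h1]; exact mul_nonneg hτ.le (Int.fract_nonneg _)
    · rw [h1]
      calc τ * Int.fract (t0 / τ) ≤ τ * 1 :=
            mul_le_mul_of_nonneg_left (Int.fract_lt_one _).le hτ.le
        _ = τ := mul_one τ
  rw [← hrep]
  exact hmain _ hmem
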